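/- Fix R > r > 0 and consider the vector field F : ℝ² → ℝ², F(u, v) = ((R + r·cos u)²/2, −(r·cos u)/2), together with the canonical projection π : ℝ² → (ℝ/2πℤ) × (ℝ/2πℤ). Then at least one of the following holds: either for every curve γ : ℝ → ℝ² satisfying γ'(t) = F(γ(t)) for all t ∈ ℝ there exists T > 0 such that π(γ(t + T)) = π(γ(t)) for all t ∈ ℝ (every trajectory on the torus is periodic), or for every such curve γ the image of π ∘ γ is dense in (ℝ/2πℤ) × (ℝ/2πℤ) (every trajectory on the torus is everywhere dense). -/

import Mathlib

open Set Function intervalIntegral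

namespace HTPD
noncomputable def gg (r R x : ℝ) : ℝ := (R + r * Real.cos x) ^ 2 / 2
noncomputable def hh (r x : ℝ) : ℝ := -(r * Real.cos x) / 2
noncomputable def T0 (r R : ℝ) : ℝ := ∫ y in (0:ℝ)..(2*Real.pi), (gg r R y)⁻¹
noncomputable def Dl (r R : ℝ) : ℝ := ∫ y in (0:ℝ)..(2*Real.pi), hh r y / gg r R y
variable {r R : ℝ}
lemma g_pos (hr : 0 < r) (hrR : r < R) (x : ℝ) : 0 < gg r R x := by
  have h1 : -r ≤ r * Real.cos x := by nlinarith [Real.neg_one_le_cos x]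
  have h2 : 0 < R + r * Real.cos x := by linarith
  exact div_pos (pow_pos h2 2) two_pos
lemma g_cont : Continuous (gg r R) := by unfold gg; fun_prop
lemma invg_cont (hr : 0 < r) (hrR : r < R) : Continuous (fun x => (gg r R x)⁻¹) :=
  g_cont.inv₀ (fun x => (g_pos hr hrR x).ne')
lemma hg_cont (hr : 0 < r) (hrR : r < R) : Continuous (fun x => hh r x / gg r R x) := by
  have : Continuous (hh r) := by unfold hh; fun_prop
  exact this.div g_cont (fun x => (g_pos hr hrR x).ne')
lemma invg_per : Function.Periodic (fun x => (gg r R x)⁻¹) (2*Real.pi) := by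
  intro x; simp [gg, Real.cos_add_two_pi]
lemma hg_per : Function.Periodic (fun x => hh r x / gg r R x) (2*Real.pi) := by
  intro x; simp [gg, hh, Real.cos_add_two_pi]
lemma T0_pos (hr : 0 < r) (hrR : r < R) : 0 < T0 r R :=
  intervalIntegral_pos_of_pos ((invg_cont hr hrR).intervalIntegrable _ _)
    (fun x => inv_pos.2 (g_pos hr hrR x)) (by positivity)

/-- integral shift for periodic integrand -/
lemma shift_integral {f : ℝ → ℝ} (hc : Continuous f) (hp : Function.Periodic f (2*Real.pi))
    (x : ℝ) : (∫ y in (0:ℝ)..(x + 2*Real.pi), f y) = (∫ y in (0:ℝ)..x, f y) + ∫ y in (0:ℝ)..(2*Real.pi), f y := by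
  have h1 : (∫ y in (0:ℝ)..x, f y) + (∫ y in x..(x + 2*Real.pi), f y)
      = ∫ y in (0:ℝ)..(x + 2*Real.pi), f y :=
    integral_add_adjacent_intervals (hc.intervalIntegrable _ _) (hc.intervalIntegrable _ _)
  have h2 : (∫ y in x..(x + 2*Real.pi), f y) = ∫ y in (0:ℝ)..(0 + 2*Real.pi), f y :=
    hp.intervalIntegral_add_eq x 0
  rw [← h1, h2, zero_add]

/-- Key lemma: every solution satisfies γ(t + T0) = γ t + (2π, Δ). -/
lemma key (hr : 0 < r) (hrR : r < R) (γ : ℝ → ℝ × ℝ)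
    (hu : ∀ t, HasDerivAt (fun s => (γ s).1) (gg r R ((γ t).1)) t)
    (hv : ∀ t, HasDerivAt (fun s => (γ s).2) (hh r ((γ t).1)) t) :
    ∀ t, γ (t + T0 r R) = ((γ t).1 + 2*Real.pi, (γ t).2 + Dl r R) := by
  set u : ℝ → ℝ := fun s => (γ s).1 with hudef
  set v : ℝ → ℝ := fun s => (γ s).2 with hvdef
  set G : ℝ → ℝ := fun x => ∫ y in (0:ℝ)..x, (gg r R y)⁻¹ with hGdef
  set H : ℝ → ℝ := fun x => ∫ y in (0:ℝ)..x, hh r y / gg r R y with hHdef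
  have hG : ∀ x, HasDerivAt G (gg r R x)⁻¹ x := fun x =>
    ((invg_cont hr hrR).integral_hasStrictDerivAt 0 x).hasDerivAt
  have hH : ∀ x, HasDerivAt H (hh r x / gg r R x) x := fun x =>
    ((hg_cont hr hrR).integral_hasStrictDerivAt 0 x).hasDerivAt
  have hGmono : StrictMono G := by
    apply strictMono_of_deriv_pos
    intro x
    rw [(hG x).deriv]
    exact inv_pos.2 (g_pos hr hrR x)
  -- φ t = G (u t) - t is constant
  have hφ : ∀ t, HasDerivAt (fun t => G (u t) - t) 0 t := by
    intro t
    have h1 : HasDerivAt (fun t => G (u t)) ((gg r R (u t))⁻¹ * gg r R (u t)) t :=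
      (hG (u t)).comp t (hu t)
    rw [inv_mul_cancel₀ (g_pos hr hrR (u t)).ne'] at h1
    have h2 : HasDerivAt (fun t => G (u t) - t) (1 - 1) t := h1.sub (hasDerivAt_id' t)
    rwa [sub_self] at h2
  have hφconst : ∀ t, G (u t) - t = G (u 0) - 0 := by
    intro t
    exact is_const_of_deriv_eq_zero (fun s => (hφ s).differentiableAt)
      (fun s => (hφ s).deriv) t 0
  have hGu : ∀ t, G (u t) = t + G (u 0) := by
    intro t; have := hφconst t; linarith
  -- ψ t = v t - H (u t) is constant
  have hψ : ∀ t, HasDerivAt (fun t => v t - H (u t)) 0 t := by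
    intro t
    have h1 : HasDerivAt (fun t => H (u t)) (hh r (u t) / gg r R (u t) * gg r R (u t)) t :=
      (hH (u t)).comp t (hu t)
    rw [div_mul_cancel₀ _ (g_pos hr hrR (u t)).ne'] at h1
    have h2 : HasDerivAt (fun t => v t - H (u t)) (hh r (u t) - hh r (u t)) t := (hv t).sub h1
    rwa [sub_self] at h2
  have hψconst : ∀ t, v t - H (u t) = v 0 - H (u 0) := by
    intro t
    exact is_const_of_deriv_eq_zero (fun s => (hψ s).differentiableAt)
      (fun s => (hψ s).deriv) t 0
  have hGshift : ∀ x, G (x + 2*Real.pi) = G x + T0 r R :=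
    fun x => shift_integral (invg_cont hr hrR) invg_per x
  have hHshift : ∀ x, H (x + 2*Real.pi) = H x + Dl r R :=
    fun x => shift_integral (hg_cont hr hrR) hg_per x
  intro t
  have hut : u (t + T0 r R) = u t + 2*Real.pi := by
    apply hGmono.injective
    rw [hGu (t + T0 r R), hGshift, hGu t]; ring
  have hvt : v (t + T0 r R) = v t + Dl r R := by
    have e1 := hψconst (t + T0 r R)
    have e2 := hψconst t
    rw [hut, hHshift] at e1
    linarith
  exact Prod.ext hut hvt

/-- iterated version with integer n -/
lemma key_iter (hr : 0 < r) (hrR : r < R) (γ : ℝ → ℝ × ℝ)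
    (hu : ∀ t, HasDerivAt (fun s => (γ s).1) (gg r R ((γ t).1)) t)
    (hv : ∀ t, HasDerivAt (fun s => (γ s).2) (hh r ((γ t).1)) t) :
    ∀ (n : ℤ) (t : ℝ), γ (t + n * T0 r R)
      = ((γ t).1 + n * (2*Real.pi), (γ t).2 + n * Dl r R) := by
  have hk := key hr hrR γ hu hv
  intro n
  induction n using Int.induction_on with
  | zero => intro t; simp
  | succ k ih =>
    intro t
    have ih' := ih t
    push_cast at ih' ⊢
    have e : t + ((k:ℝ) + 1) * T0 r R = (t + (k:ℝ) * T0 r R) + T0 r R := by ring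
    rw [e, hk, ih']
    dsimp
    rw [Prod.mk.injEq]
    constructor <;> ring
  | pred k ih =>
    intro t
    have ih' := ih t
    push_cast at ih' ⊢
    have h1 := hk (t + (-(k:ℝ) - 1) * T0 r R)
    have e : t + (-(k:ℝ) - 1) * T0 r R + T0 r R = t + (-(k:ℝ)) * T0 r R := by ring
    rw [e, ih'] at h1
    have hfst := congrArg Prod.fst h1
    have hsnd := congrArg Prod.snd h1
    dsimp at hfst hsnd
    exact Prod.ext (by linear_combination -hfst) (by linear_combination -hsnd)

lemma dense_zmultiples (p δ : ℝ) (hp : 0 < p) (hirr : ∀ q : ℚ, δ ≠ q * p) :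
    Dense (Set.range (fun n : ℤ => n • ((δ : AddCircle p)))) := by
  set S := AddSubgroup.closure ({p, δ} : Set ℝ) with hS
  rcases S.dense_or_cyclic with hd | ⟨a, ha⟩
  · -- dense case: push density to the quotient
    have hcont : Continuous ((↑) : ℝ → AddCircle p) := continuous_quotient_mk'
    have hsurj : Surjective ((↑) : ℝ → AddCircle p) := Quotient.mk''_surjective
    have hmap : AddSubgroup.map (QuotientAddGroup.mk' (AddSubgroup.zmultiples p)) S
        = AddSubgroup.zmultiples ((δ : AddCircle p)) := by
      rw [hS, AddMonoidHom.map_closure, Set.image_pair]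
      apply le_antisymm
      · rw [AddSubgroup.closure_le]
        rintro x (rfl | rfl)
        · have h0 : (QuotientAddGroup.mk' (AddSubgroup.zmultiples p)) p = (0 : AddCircle p) :=
            AddCircle.coe_period p
          rw [h0]
          exact AddSubgroup.zero_mem _
        · exact AddSubgroup.mem_zmultiples _
      · intro x hx
        obtain ⟨n, rfl⟩ := AddSubgroup.mem_zmultiples_iff.mp hx
        exact AddSubgroup.zsmul_mem _ (AddSubgroup.subset_closure (by right; rfl)) n
    have himg : Dense ((↑) '' (S : Set ℝ) : Set (AddCircle p)) := by
      intro x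
      rcases hsurj x with ⟨y, rfl⟩
      have hy : y ∈ closure (S : Set ℝ) := hd y
      exact image_closure_subset_closure_image hcont ⟨y, hy, rfl⟩
    have heq : ((↑) '' (S : Set ℝ) : Set (AddCircle p))
        = Set.range (fun n : ℤ => n • ((δ : AddCircle p))) := by
      have h1 : ((↑) '' (S : Set ℝ) : Set (AddCircle p))
          = (AddSubgroup.map (QuotientAddGroup.mk' (AddSubgroup.zmultiples p)) S : Set (AddCircle p)) := by
        rw [AddSubgroup.coe_map]; rfl
      rw [h1, hmap]
      ext x
      simp only [SetLike.mem_coe, AddSubgroup.mem_zmultiples_iff, Set.mem_range]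
    rwa [heq] at himg
  · -- cyclic case: contradiction with irrationality
    exfalso
    have hpS : p ∈ S := AddSubgroup.subset_closure (by left; rfl)
    have hδS : δ ∈ S := AddSubgroup.subset_closure (by right; rfl)
    rw [ha, ← AddSubgroup.zmultiples_eq_closure, AddSubgroup.mem_zmultiples_iff] at hpS hδS
    obtain ⟨m, hm⟩ := hpS
    obtain ⟨n, hn⟩ := hδS
    have ha0 : a ≠ 0 := by
      rintro rfl
      rw [smul_zero] at hm
      exact hp.ne' hm.symm
    have hm0 : (m : ℝ) ≠ 0 := by
      rintro h
      rw [zsmul_eq_mul, h, zero_mul] at hm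
      exact hp.ne' hm.symm
    apply hirr ((n : ℚ) / (m : ℚ))
    rw [zsmul_eq_mul] at hm hn
    push_cast
    rw [← hm, ← hn]
    field_simp

lemma dense_orbit (p δ c : ℝ) (hp : 0 < p) (hirr : ∀ q : ℚ, δ ≠ q * p) :
    Dense (Set.range (fun n : ℤ => (c : AddCircle p) + n • (δ : AddCircle p))) := by
  have hD := dense_zmultiples p δ hp hirr
  intro x
  have hy : (-(c : AddCircle p) + x) ∈ closure (Set.range (fun n : ℤ => n • ((δ : AddCircle p)))) :=
    hD _
  have hmaps : MapsTo (fun z => (c : AddCircle p) + z)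
      (Set.range (fun n : ℤ => n • ((δ : AddCircle p))))
      (Set.range (fun n : ℤ => (c : AddCircle p) + n • (δ : AddCircle p))) := by
    rintro z ⟨n, rfl⟩
    exact ⟨n, rfl⟩
  have := map_mem_closure (continuous_const.add continuous_id) hy hmaps
  simpa using this
lemma coe_shift (x y : ℝ) (n : ℤ) (hy : y = n * (2*Real.pi)) :
    ((x + y : ℝ) : AddCircle (2*Real.pi)) = (x : AddCircle (2*Real.pi)) := by
  subst hy
  rw [AddCircle.coe_add]
  have : (((n : ℝ) * (2*Real.pi) : ℝ) : AddCircle (2*Real.pi)) = 0 :=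
    (AddCircle.coe_eq_zero_iff _).mpr ⟨n, by rw [zsmul_eq_mul]⟩
  rw [this, add_zero]

end HTPD

open HTPD in
theorem horizontal_torus_periodic_or_dense
    (r R : ℝ) (hr : 0 < r) (hrR : r < R)
    (F : ℝ × ℝ → ℝ × ℝ)
    (hF : F = fun p => ((R + r * Real.cos p.1) ^ 2 / 2, -(r * Real.cos p.1) / 2))
    (π : ℝ × ℝ → AddCircle (2 * Real.pi) × AddCircle (2 * Real.pi))
    (hπ : π = fun p => ((p.1 : AddCircle (2 * Real.pi)), (p.2 : AddCircle (2 * Real.pi)))) :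
    (∀ γ : ℝ → ℝ × ℝ, (∀ t : ℝ, HasDerivAt γ (F (γ t)) t) →
      ∃ T : ℝ, 0 < T ∧ ∀ t : ℝ, π (γ (t + T)) = π (γ t)) ∨
    (∀ γ : ℝ → ℝ × ℝ, (∀ t : ℝ, HasDerivAt γ (F (γ t)) t) →
      Dense (Set.range (π ∘ γ))) := by
  subst hF hπ
  -- component derivative extraction
  have comp : ∀ (γ : ℝ → ℝ × ℝ),
      (∀ t : ℝ, HasDerivAt γ (((R + r * Real.cos (γ t).1) ^ 2 / 2, -(r * Real.cos (γ t).1) / 2) : ℝ × ℝ) t) →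
      (∀ t, HasDerivAt (fun s => (γ s).1) (gg r R ((γ t).1)) t) ∧
      (∀ t, HasDerivAt (fun s => (γ s).2) (hh r ((γ t).1)) t) := by
    intro γ hγ
    constructor
    · intro t
      have h1 := ((hγ t).hasFDerivAt.fst).hasDerivAt
      simpa [gg] using h1
    · intro t
      have h1 := ((hγ t).hasFDerivAt.snd).hasDerivAt
      simpa [hh] using h1
  by_cases hQ : ∃ q : ℚ, Dl r R = q * (2 * Real.pi)
  · left
    intro γ hγ
    obtain ⟨hu, hv⟩ := comp γ hγ
    obtain ⟨q, hq⟩ := hQ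
    have hdpos : (0 : ℝ) < q.den := by exact_mod_cast q.pos
    refine ⟨(q.den : ℝ) * T0 r R, mul_pos hdpos (T0_pos hr hrR), ?_⟩
    intro t
    have hiter := key_iter hr hrR γ hu hv (q.den : ℤ) t
    push_cast at hiter
    rw [hiter]
    have hnum : ((q.den : ℝ)) * Dl r R = (q.num : ℝ) * (2 * Real.pi) := by
      rw [hq]
      have : ((q.den : ℚ)) * q = (q.num : ℚ) := by
        rw [mul_comm, Rat.mul_den_eq_num]
      have h' : ((q.den:ℝ)) * (q:ℝ) = (q.num:ℝ) := by exact_mod_cast this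
      rw [← h']; ring
    dsimp only
    rw [coe_shift _ _ q.den (by push_cast; ring), coe_shift _ _ q.num hnum]
  · right
    intro γ hγ
    obtain ⟨hu, hv⟩ := comp γ hγ
    push_neg at hQ
    have h2π : (0:ℝ) < 2 * Real.pi := by positivity
    have hiter := key_iter hr hrR γ hu hv
    -- density
    rintro ⟨a, b⟩
    obtain ⟨aa, rfl⟩ := QuotientAddGroup.mk_surjective a
    -- find s with (γ s).1 = aa
    have ucont : Continuous (fun t => (γ t).1) :=
      continuous_iff_continuousAt.mpr (fun t => (hu t).continuousAt)
    obtain ⟨n, hn⟩ := exists_nat_ge (|aa - (γ 0).1| / (2*Real.pi))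
    have hab : |aa - (γ 0).1| ≤ (n : ℝ) * (2*Real.pi) := by
      rw [div_le_iff₀ h2π] at hn
      linarith
    obtain ⟨hab1, hab2⟩ := abs_le.mp hab
    have hlo := hiter (-(n:ℤ)) 0
    have hhi := hiter ((n:ℤ)) 0
    push_cast at hlo hhi
    rw [zero_add] at hlo hhi
    have hmem : aa ∈ Icc ((γ (-(n:ℝ) * T0 r R)).1) ((γ ((n:ℝ) * T0 r R)).1) := by
      rw [hlo, hhi]
      constructor <;> dsimp <;> linarith
    have hsub := intermediate_value_Icc
      (by nlinarith [T0_pos hr hrR] : (-(n:ℝ)) * T0 r R ≤ (n:ℝ) * T0 r R)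
      ucont.continuousOn
    obtain ⟨s, _, hs⟩ := hsub hmem
    -- orbit of the v coordinate is dense in the fiber
    have hD := dense_orbit (2*Real.pi) (Dl r R) ((γ s).2) h2π hQ
    have hb := hD b
    refine map_mem_closure (Continuous.prodMk_right ((aa : AddCircle (2*Real.pi)))) hb ?_
    rintro z ⟨m, rfl⟩
    refine ⟨s + (m : ℝ) * T0 r R, ?_⟩
    have him := hiter m s
    push_cast at him
    simp only [comp_apply, him]
    rw [coe_shift _ _ m (by push_cast; ring), show (γ s).1 = aa from hs, AddCircle.coe_add]
    congr 1
    rw [← AddCircle.coe_zsmul, zsmul_eq_mul]
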